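/- For every finite simple graph G with m(G) = 2^β(G), G is bipartite with bipartition (S, V(G) \ S), where S is any minimum vertex cover of G; moreover every vertex of S has a neighbor of degree 1 in G. -/

import Mathlib

variable {V : Type*}

/-- `S` is an independent set of `G`: no two vertices of `S` are adjacent. -/
def IsIndepSet (G : SimpleGraph V) (S : Set V) : Prop :=
  ∀ ⦃u v : V⦄, u ∈ S → v ∈ S → ¬ G.Adj u v

/-- `S` is a maximal independent set of `G`. -/
def IsMaxIndepSet (G : SimpleGraph V) (S : Set V) : Prop :=
  IsIndepSet G S ∧ ∀ T : Set V, IsIndepSet G T → S ⊆ T → S = T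

/-- `m(G)`: the number of maximal independent sets of `G`. -/
noncomputable def numMaxIndep (G : SimpleGraph V) : ℕ :=
  {S : Set V | IsMaxIndepSet G S}.ncard

/-- `C` is a vertex cover of `G`: every edge has at least one endpoint in `C`. -/
def IsVertexCover (G : SimpleGraph V) (C : Set V) : Prop :=
  ∀ ⦃u v : V⦄, G.Adj u v → u ∈ C ∨ v ∈ C

/-- `β(G)`: the minimum size of a vertex cover of `G`. -/
noncomputable def coverNumber (G : SimpleGraph V) : ℕ :=
  sInf {n : ℕ | ∃ C : Set V, IsVertexCover G C ∧ C.ncard = n}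

/-- `M` is a matching of `G`: a set of edges of `G`, pairwise sharing no vertex. -/
def IsMatching (G : SimpleGraph V) (M : Set (Sym2 V)) : Prop :=
  M ⊆ G.edgeSet ∧ ∀ e ∈ M, ∀ f ∈ M, e ≠ f → ∀ v : V, v ∈ e → v ∉ f

/-- `M` is an induced matching of `G`: a matching such that no two distinct
edges of `M` are joined by an edge of `G`. -/
def IsInducedMatching (G : SimpleGraph V) (M : Set (Sym2 V)) : Prop :=
  IsMatching G M ∧ ∀ e ∈ M, ∀ f ∈ M, e ≠ f → ∀ u v : V, u ∈ e → v ∈ f → ¬ G.Adj u v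

/-- `ν(G)`: the maximum size of a matching of `G`. -/
noncomputable def matchingNumber (G : SimpleGraph V) : ℕ :=
  sSup {n : ℕ | ∃ M : Set (Sym2 V), IsMatching G M ∧ M.ncard = n}

/-- `ν₀(G)`: the maximum size of an induced matching of `G`. -/
noncomputable def inducedMatchingNumber (G : SimpleGraph V) : ℕ :=
  sSup {n : ℕ | ∃ M : Set (Sym2 V), IsInducedMatching G M ∧ M.ncard = n}

/-- `G` is bipartite: the vertices split into two sides with every edge crossing. -/
def IsBipartite (G : SimpleGraph V) : Prop :=
  ∃ A : Set V, ∀ ⦃u v : V⦄, G.Adj u v → (u ∈ A ↔ v ∉ A)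


private lemma ncard_subsets_eq {V : Type*} [Fintype V] (S : Set V) :
    {A : Set V | A ⊆ S}.ncard = 2 ^ S.ncard := by
  classical
  have hSfin : S.Finite := Set.toFinite S
  have h : {A : Set V | A ⊆ S} = (fun F : Finset V => (F : Set V)) '' ↑hSfin.toFinset.powerset := by
    ext A
    simp only [Set.mem_setOf_eq, Set.mem_image, Finset.mem_coe, Finset.mem_powerset]
    constructor
    · intro hA
      refine ⟨(hSfin.subset hA).toFinset, ?_, (hSfin.subset hA).coe_toFinset⟩
      exact (Set.Finite.toFinset_subset_toFinset).mpr hA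
    · rintro ⟨B, hB, rfl⟩
      simpa using (Finset.coe_subset.mpr hB).trans hSfin.coe_toFinset.subset
  rw [h, Set.ncard_image_of_injective _ Finset.coe_injective, Set.ncard_coe_finset,
    Finset.card_powerset, Set.ncard_eq_toFinset_card S hSfin]

/-- If `m(G) = 2 ^ β(G)` then for any minimum vertex cover `S`, the
pair `(S, V \\ S)` is a bipartition of `G` and every vertex of `S` has a neighbor
of degree 1. -/
theorem bipartition_and_leaf_of_extremal [Fintype V] (G : SimpleGraph V)
    [DecidableRel G.Adj] (hm : numMaxIndep G = 2 ^ coverNumber G)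
    (S : Set V) (hS : IsVertexCover G S) (hcard : S.ncard = coverNumber G) :
    (∀ u v : V, G.Adj u v → (u ∈ S ∧ v ∉ S) ∨ (u ∉ S ∧ v ∈ S)) ∧
      ∀ x ∈ S, ∃ y : V, G.Adj x y ∧ G.degree y = 1 := by
  classical
  -- every neighbor of a vertex outside `S` lies in `S`
  have hcov : ∀ {v w : V}, v ∉ S → G.Adj v w → w ∈ S := by
    intro v w hv ha
    exact (hS ha).resolve_left hv
  -- a maximal independent set is determined by its intersection with `S`
  set F : Set V → Set V := fun A => A ∪ {v | v ∉ S ∧ ∀ w ∈ A, ¬ G.Adj v w} with hF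
  have hdet : ∀ M : Set V, IsMaxIndepSet G M → M = F (M ∩ S) := by
    intro M hM
    apply Set.Subset.antisymm
    · intro m hm
      by_cases hmS : m ∈ S
      · exact Or.inl ⟨hm, hmS⟩
      · exact Or.inr ⟨hmS, fun w hw => hM.1 hm hw.1⟩
    · rintro x (hx | ⟨hxS, hx⟩)
      · exact hx.1
      · have hind : IsIndepSet G (insert x M) := by
          rintro u v (rfl | hu) (rfl | hv) ha
          · exact G.loopless.irrefl _ ha
          · exact hx v ⟨hv, hcov hxS ha⟩ ha
          · exact hx u ⟨hu, hcov hxS ha.symm⟩ ha.symm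
          · exact hM.1 hu hv ha
        have := hM.2 (insert x M) hind (Set.subset_insert x M)
        rw [this]
        exact Set.mem_insert x M
  -- the surjectivity of `M ↦ M ∩ S`
  have hsurj : ∀ A ⊆ S, ∃ M : Set V, IsMaxIndepSet G M ∧ M ∩ S = A := by
    have hinj : Set.InjOn (fun M => M ∩ S) {M : Set V | IsMaxIndepSet G M} := by
      intro M1 h1 M2 h2 h
      rw [hdet M1 h1, hdet M2 h2]
      simp only at h
      rw [h]
    have hsub : (fun M => M ∩ S) '' {M : Set V | IsMaxIndepSet G M} ⊆ {A : Set V | A ⊆ S} := by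
      rintro _ ⟨M, _, rfl⟩
      exact Set.inter_subset_right
    have hcard2 : ((fun M => M ∩ S) '' {M : Set V | IsMaxIndepSet G M}).ncard
        = {A : Set V | A ⊆ S}.ncard := by
      rw [Set.ncard_image_of_injOn hinj, ncard_subsets_eq S, hcard]
      exact hm
    have heq : (fun M => M ∩ S) '' {M : Set V | IsMaxIndepSet G M} = {A : Set V | A ⊆ S} :=
      Set.eq_of_subset_of_ncard_le hsub hcard2.ge (Set.toFinite _)
    intro A hA
    have : A ∈ (fun M => M ∩ S) '' {M : Set V | IsMaxIndepSet G M} := heq ▸ hA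
    obtain ⟨M, hM, hMA⟩ := this
    exact ⟨M, hM, hMA⟩
  -- `S` is independent
  have hSind : ∀ ⦃u v : V⦄, u ∈ S → v ∈ S → ¬ G.Adj u v := by
    obtain ⟨M, hM, hMS⟩ := hsurj S (Set.Subset.refl S)
    have hSM : S ⊆ M := by rw [← hMS]; exact Set.inter_subset_left
    exact fun u v hu hv => hM.1 (hSM hu) (hSM hv)
  constructor
  · intro u v ha
    rcases hS ha with hu | hv
    · exact Or.inl ⟨hu, fun hv => hSind hu hv ha⟩
    · exact Or.inr ⟨fun hu => hSind hu hv ha, hv⟩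
  · intro x hx
    obtain ⟨M, hM, hMS⟩ := hsurj (S \ {x}) Set.diff_subset
    have hxM : x ∉ M := by
      intro hxM
      have : x ∈ S \ {x} := hMS ▸ Set.mem_inter hxM hx
      exact this.2 rfl
    have hnind : ¬ IsIndepSet G (insert x M) := by
      intro h
      have := hM.2 (insert x M) h (Set.subset_insert x M)
      exact hxM (by rw [this]; exact Set.mem_insert x M)
    unfold IsIndepSet at hnind
    push_neg at hnind
    obtain ⟨u, v, hu, hv, ha⟩ := hnind
    -- extract a neighbor `y ∈ M` of `x`
    have hxy : ∃ y ∈ M, G.Adj x y := by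
      rcases hu with rfl | hu <;> rcases hv with rfl | hv
      · exact absurd ha (G.loopless.irrefl _)
      · exact ⟨v, hv, ha⟩
      · exact ⟨u, hu, ha.symm⟩
      · exact absurd ha (hM.1 hu hv)
    obtain ⟨y, hyM, hxyadj⟩ := hxy
    have hyS : y ∉ S := by
      intro hyS
      have : y ∈ S \ {x} := hMS ▸ Set.mem_inter hyM hyS
      exact hSind hx hyS hxyadj
    refine ⟨y, hxyadj, ?_⟩
    have hnbr : G.neighborFinset y = {x} := by
      ext z
      simp only [SimpleGraph.mem_neighborFinset, Finset.mem_singleton]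
      constructor
      · intro hadj
        by_contra hzx
        have hzS : z ∈ S := hcov hyS hadj
        have hzM : z ∈ M := by
          have : z ∈ S \ {x} := ⟨hzS, hzx⟩
          rw [← hMS] at this
          exact this.1
        exact hM.1 hyM hzM hadj
      · rintro rfl
        exact hxyadj.symm
    show (G.neighborFinset y).card = 1
    rw [hnbr]
    exact Finset.card_singleton x
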